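/- The right-arc matching of an m-diagram is well-defined: for every standard Young tableau T of shape (n,n,n) with rows R₁, R₂, R₃ and every k ∈ R₃, the set { j ∈ R₂ : j < k and j ≠ R(k′) for all k′ ∈ R₃ with k′ < k } is nonempty, so the greedy rule defines an injective function R : R₃ → R₂ with R(k) < k for all k ∈ R₃. -/

import Mathlib

/-!
STATEMENT 12: The right-arc matching of an m-diagram is well-defined: for every
standard Young tableau `T` of shape `(n,n,n)` with rows `R₁, R₂, R₃` and every
`k ∈ R₃`, the set `{ j ∈ R₂ : j < k and j ≠ R(k') for all k' ∈ R₃ with k' < k }` is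
nonempty, so the greedy rule defines an injective function `R : R₃ → R₂` with
`R(k) < k` for all `k ∈ R₃`.
-/

/-- `T` is a standard Young tableau of shape `(n,n,n) ⊢ 3n`: rows and columns strictly
increase and each of the values `1, …, 3n` is used exactly once.  `T r c` is the entry
in row `r`, column `c`. -/
def IsStandardNNN (n : ℕ) (T : Fin 3 → Fin n → ℕ) : Prop :=
  (∀ r : Fin 3, ∀ c c' : Fin n, c < c' → T r c < T r c') ∧
  (∀ r r' : Fin 3, r < r' → ∀ c : Fin n, T r c < T r' c) ∧
  (∀ (r : Fin 3) (c : Fin n), T r c ∈ Finset.Icc 1 (3 * n)) ∧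
  (∀ v, 1 ≤ v → v ≤ 3 * n → ∃! p : Fin 3 × Fin n, T p.1 p.2 = v)

/-- The set of entries of row `r` of `T` (`r = 0, 1, 2` giving `R₁, R₂, R₃`). -/
def rowSet (n : ℕ) (T : Fin 3 → Fin n → ℕ) (r : Fin 3) : Finset ℕ :=
  Finset.univ.image (T r)

/-- The set of elements of `A` already used as matches of the elements of `B`
smaller than `n`, processing the elements of `B` in increasing order greedily. -/
def usedMatches (A B : Finset ℕ) : ℕ → Finset ℕ
  | 0 => ∅
  | n + 1 =>
    let U := usedMatches A B n
    if n ∈ B then U ∪ {((A \ U).filter (· < n)).sup id} else U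

/-- The greedy matching rule of the m-diagram construction: processing the elements
`j` of `B` in increasing order, `greedyMatch A B j` is the largest element of `A`
smaller than `j` not already used as the match of an earlier element of `B`, i.e.
`greedyMatch A B j = max { a ∈ A : a < j and a ≠ greedyMatch A B j' for all j' ∈ B
with j' < j }`.  Applied with `A = R₁`, `B = R₂` it produces the left arcs
`(greedyMatch R₁ R₂ j, j)`; applied with `A = R₂`, `B = R₃` it produces the right
arcs. -/
def greedyMatch (A B : Finset ℕ) (j : ℕ) : ℕ :=
  ((A \ usedMatches A B j).filter (· < j)).sup id

/-- Main invariant of the greedy process. -/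
lemma usedMatches_spec (A B : Finset ℕ)
    (hcount : ∀ m ∈ B, (B.filter (· < m)).card < (A.filter (· < m)).card) :
    ∀ m, usedMatches A B m = (B.filter (· < m)).image (greedyMatch A B) ∧
      usedMatches A B m ⊆ A.filter (· < m) ∧
      (usedMatches A B m).card = (B.filter (· < m)).card := by
  intro m
  induction m with
  | zero => simp [usedMatches]
  | succ m ih =>
    obtain ⟨him, hsub, hcard⟩ := ih
    by_cases hm : m ∈ B
    · have heq : (A \ usedMatches A B m).filter (· < m)
          = A.filter (· < m) \ usedMatches A B m := by
        ext j
        simp only [Finset.mem_filter, Finset.mem_sdiff]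
        tauto
      have hSne : ((A \ usedMatches A B m).filter (· < m)).Nonempty := by
        rw [heq, ← Finset.card_pos, Finset.card_sdiff_of_subset hsub, hcard]
        exact Nat.sub_pos_of_lt (hcount m hm)
      obtain ⟨g, hgmem, hgeq⟩ := Finset.exists_mem_eq_sup _ hSne id
      have hgreedy : greedyMatch A B m = g := by rw [greedyMatch, hgeq]; rfl
      simp only [Finset.mem_filter, Finset.mem_sdiff] at hgmem
      have hU : usedMatches A B (m + 1) = insert g (usedMatches A B m) := by
        simp only [usedMatches, hm, if_true]
        rw [hgeq]
        ext x
        simp [or_comm]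
      have hBf : B.filter (· < m + 1) = insert m (B.filter (· < m)) := by
        ext j
        simp only [Finset.mem_insert, Finset.mem_filter, Nat.lt_succ_iff_lt_or_eq]
        constructor
        · rintro ⟨hj, h | rfl⟩
          · exact Or.inr ⟨hj, h⟩
          · exact Or.inl rfl
        · rintro (rfl | ⟨hj, h⟩)
          · exact ⟨hm, Or.inr rfl⟩
          · exact ⟨hj, Or.inl h⟩
      refine ⟨?_, ?_, ?_⟩
      · rw [hU, hBf, Finset.image_insert, hgreedy, him]
      · rw [hU]
        intro j hj
        rcases Finset.mem_insert.mp hj with h | h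
        · subst h
          exact Finset.mem_filter.mpr ⟨hgmem.1.1, Nat.lt_succ_of_lt hgmem.2⟩
        · have := hsub h
          simp only [Finset.mem_filter] at this ⊢
          exact ⟨this.1, Nat.lt_succ_of_lt this.2⟩
      · rw [hU, hBf, Finset.card_insert_of_notMem hgmem.1.2,
          Finset.card_insert_of_notMem (by simp), hcard]
    · have hU : usedMatches A B (m + 1) = usedMatches A B m := by
        simp only [usedMatches, hm, if_false]
      have hBf : B.filter (· < m + 1) = B.filter (· < m) := by
        ext j
        simp only [Finset.mem_filter, Nat.lt_succ_iff_lt_or_eq]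
        constructor
        · rintro ⟨hj, h | rfl⟩
          · exact ⟨hj, h⟩
          · exact absurd hj hm
        · rintro ⟨hj, h⟩; exact ⟨hj, Or.inl h⟩
      rw [hU, hBf]
      refine ⟨him, fun j hj => ?_, hcard⟩
      have := hsub hj
      simp only [Finset.mem_filter] at this ⊢
      exact ⟨this.1, Nat.lt_succ_of_lt this.2⟩

/-- For `k ∈ B`, the set of available matches is nonempty and contains the greedy
match. -/
lemma greedyMatch_mem (A B : Finset ℕ)
    (hcount : ∀ m ∈ B, (B.filter (· < m)).card < (A.filter (· < m)).card)
    {k : ℕ} (hk : k ∈ B) :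
    greedyMatch A B k ∈ (A \ usedMatches A B k).filter (· < k) := by
  obtain ⟨_, hsub, hcard⟩ := usedMatches_spec A B hcount k
  have heq : (A \ usedMatches A B k).filter (· < k)
      = A.filter (· < k) \ usedMatches A B k := by
    ext j
    simp only [Finset.mem_filter, Finset.mem_sdiff]
    tauto
  have hSne : ((A \ usedMatches A B k).filter (· < k)).Nonempty := by
    rw [heq, ← Finset.card_pos, Finset.card_sdiff_of_subset hsub, hcard]
    exact Nat.sub_pos_of_lt (hcount k hk)
  obtain ⟨g, hgmem, hgeq⟩ := Finset.exists_mem_eq_sup _ hSne id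
  have : greedyMatch A B k = g := by rw [greedyMatch, hgeq]; rfl
  rw [this]
  exact hgmem

/-- The right-arc matching is well-defined: for each `k ∈ R₃` the set of available left
endpoints is nonempty, and the greedy rule `R = greedyMatch R₂ R₃` is injective on
`R₃`, takes values in `R₂`, and satisfies `R k < k`. -/
theorem right_arc_matching_well_defined (n : ℕ) (T : Fin 3 → Fin n → ℕ)
    (hT : IsStandardNNN n T) :
    (∀ k ∈ rowSet n T 2,
      ((rowSet n T 1).filter fun j => j < k ∧
        ∀ k' ∈ rowSet n T 2, k' < k → greedyMatch (rowSet n T 1) (rowSet n T 2) k' ≠ j).Nonempty) ∧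
    Set.InjOn (greedyMatch (rowSet n T 1) (rowSet n T 2)) ↑(rowSet n T 2) ∧
    (∀ k ∈ rowSet n T 2,
      greedyMatch (rowSet n T 1) (rowSet n T 2) k ∈ rowSet n T 1 ∧
      greedyMatch (rowSet n T 1) (rowSet n T 2) k < k) := by
  obtain ⟨hrow, hcol, _, _⟩ := hT
  set A := rowSet n T 1 with hA
  set B := rowSet n T 2 with hB
  -- the counting hypothesis
  have hcount : ∀ m ∈ B, (B.filter (· < m)).card < (A.filter (· < m)).card := by
    intro m hm
    obtain ⟨c, _, rfl⟩ := Finset.mem_image.mp hm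
    have hinj1 : Function.Injective (T 1) := by
      intro a b hab
      rcases lt_trichotomy a b with h | h | h
      · exact absurd hab (ne_of_lt (hrow 1 a b h))
      · exact h
      · exact absurd hab.symm (ne_of_lt (hrow 1 b a h))
    have h12 : ∀ c' : Fin n, T 1 c' ≤ T 2 c' := fun c' =>
      le_of_lt (hcol 1 2 (by decide) c')
    -- lower bound for A
    have hAsub : (Finset.Iic c).image (T 1) ⊆ A.filter (· < T 2 c) := by
      intro j hj
      obtain ⟨c', hc', rfl⟩ := Finset.mem_image.mp hj
      refine Finset.mem_filter.mpr ⟨Finset.mem_image.mpr ⟨c', Finset.mem_univ _, rfl⟩, ?_⟩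
      rcases eq_or_lt_of_le (Finset.mem_Iic.mp hc') with h | h
      · rw [h]; exact hcol 1 2 (by decide) c
      · exact lt_trans (hrow 1 c' c h) (hcol 1 2 (by decide) c)
    have hAcard : (c : ℕ) + 1 ≤ (A.filter (· < T 2 c)).card := by
      calc (c : ℕ) + 1 = (Finset.Iic c).card := (Fin.card_Iic c).symm
        _ = ((Finset.Iic c).image (T 1)).card :=
            (Finset.card_image_of_injective _ hinj1).symm
        _ ≤ _ := Finset.card_le_card hAsub
    -- upper bound for B
    have hBsub : B.filter (· < T 2 c) ⊆ (Finset.Iio c).image (T 2) := by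
      intro j hj
      obtain ⟨hjB, hjlt⟩ := Finset.mem_filter.mp hj
      obtain ⟨c', _, rfl⟩ := Finset.mem_image.mp hjB
      refine Finset.mem_image.mpr ⟨c', Finset.mem_Iio.mpr ?_, rfl⟩
      by_contra h
      push_neg at h
      rcases eq_or_lt_of_le h with h' | h'
      · rw [h'] at hjlt; exact lt_irrefl _ hjlt
      · exact absurd hjlt (not_lt_of_gt (hrow 2 c c' h'))
    have hBcard : (B.filter (· < T 2 c)).card ≤ (c : ℕ) := by
      calc (B.filter (· < T 2 c)).card ≤ ((Finset.Iio c).image (T 2)).card :=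
            Finset.card_le_card hBsub
        _ ≤ (Finset.Iio c).card := Finset.card_image_le
        _ = (c : ℕ) := Fin.card_Iio c
    exact lt_of_le_of_lt hBcard (lt_of_lt_of_le (Nat.lt_succ_self _) hAcard)
  have hspec := usedMatches_spec A B hcount
  -- available set equals (A \ U k).filter (< k)
  have hsets : ∀ k : ℕ,
      (A.filter fun j => j < k ∧ ∀ k' ∈ B, k' < k → greedyMatch A B k' ≠ j)
        = (A \ usedMatches A B k).filter (· < k) := by
    intro k
    ext j
    have him := (hspec k).1
    simp only [Finset.mem_filter, Finset.mem_sdiff, him, Finset.mem_image]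
    constructor
    · rintro ⟨hjA, hjk, hne⟩
      refine ⟨⟨hjA, fun hcon => ?_⟩, hjk⟩
      obtain ⟨k', ⟨hk'B, hk'lt⟩, hgk⟩ := hcon
      exact hne k' hk'B hk'lt hgk
    · rintro ⟨⟨hjA, hnot⟩, hjk⟩
      exact ⟨hjA, hjk, fun k' hB hlt heq => hnot ⟨k', ⟨hB, hlt⟩, heq⟩⟩
  refine ⟨?_, ?_, ?_⟩
  · intro k hk
    rw [hsets k]
    exact ⟨greedyMatch A B k, greedyMatch_mem A B hcount hk⟩
  · have key : ∀ a ∈ B, ∀ b ∈ B, a < b → greedyMatch A B a ≠ greedyMatch A B b := by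
      intro a ha b hb hab heq
      have h1 : greedyMatch A B a ∈ usedMatches A B b := by
        rw [(hspec b).1]
        exact Finset.mem_image.mpr ⟨a, Finset.mem_filter.mpr ⟨ha, hab⟩, rfl⟩
      have h2 := greedyMatch_mem A B hcount hb
      simp only [Finset.mem_filter, Finset.mem_sdiff] at h2
      rw [heq] at h1
      exact h2.1.2 h1
    intro k hk k' hk' heq
    rw [Finset.mem_coe] at hk hk'
    rcases lt_trichotomy k k' with h | h | h
    · exact absurd heq (key k hk k' hk' h)
    · exact h
    · exact absurd heq.symm (key k' hk' k hk h)
  · intro k hk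
    have h := greedyMatch_mem A B hcount hk
    simp only [Finset.mem_filter, Finset.mem_sdiff] at h
    exact ⟨h.1.1, h.2⟩
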